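/- Let α, β be finite cardinals with 2 ≤ α, β < ℵ₀ and let P be a poset. Then P is (α,β)-representable if and only if for all p, q ∈ P with p ≰ q and all n ∈ ℕ, Win^{α,β}_n({p}, q) holds. -/

import Mathlib

open Cardinal

universe u

/-- A poset `P` is `(α,β)`-representable if there is a set `X` and a map `h : P → Set X`
which is an order-embedding, sends existing infima of sets of cardinality `< α` to
intersections, and existing suprema of sets of cardinality `< β` to unions. -/
def IsABRepresentable (α β : Cardinal.{u}) (P : Type u) [PartialOrder P] : Prop :=
  ∃ (X : Type u) (h : P → Set X),
    (∀ p q : P, p ≤ q ↔ h p ⊆ h q) ∧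
    (∀ (S : Set P) (m : P), #S < α → IsGLB S m → h m = ⋂ s ∈ S, h s) ∧
    (∀ (T : Set P) (j : P), #T < β → IsLUB T j → h j = ⋃ t ∈ T, h t)

/-- `Win α β n U q` : player ∃ has an `n`-strategy in the `(α,β)`-game with
starting position `(U, {q})`. -/
def Win (α β : Cardinal.{u}) {P : Type u} [PartialOrder P] : ℕ → Set P → P → Prop
  | 0, U, q => q ∉ U
  | n + 1, U, q => q ∉ U ∧
      (∀ a ∈ U, ∀ b, a ≤ b → Win α β n (insert b U) q) ∧
      (∀ A : Set P, A ⊆ U → #A < α → ∀ m, IsGLB A m → Win α β n (insert m U) q) ∧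
      (∀ B : Set P, #B < β → ∀ j, IsLUB B j → j ∈ U → ∃ b ∈ B, Win α β n (insert b U) q)

section Aux

variable (α β : Cardinal.{u}) {P : Type u} [PartialOrder P]

lemma win_succ_imp : ∀ (n : ℕ) (U : Set P) (q : P),
    Win α β (n + 1) U q → Win α β n U q := by
  intro n
  induction n with
  | zero => intro U q h; exact h.1
  | succ n ih =>
    intro U q h
    obtain ⟨hq, h1, h2, h3⟩ := h
    refine ⟨hq, ?_, ?_, ?_⟩
    · intro a ha b hab; exact ih _ _ (h1 a ha b hab)
    · intro A hA hcard m hm; exact ih _ _ (h2 A hA hcard m hm)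
    · intro B hB j hj hjU
      obtain ⟨b, hb, hw⟩ := h3 B hB j hj hjU
      exact ⟨b, hb, ih _ _ hw⟩

lemma win_of_le {m n : ℕ} (h : m ≤ n) {U : Set P} {q : P}
    (hw : Win α β n U q) : Win α β m U q := by
  have key : ∀ (k : ℕ) (U : Set P) (q : P), Win α β (m + k) U q → Win α β m U q := by
    intro k
    induction k with
    | zero => intro U q hw; exact hw
    | succ k ih => intro U q hw; exact ih U q (win_succ_imp α β (m + k) U q hw)
  obtain ⟨k, rfl⟩ := Nat.exists_eq_add_of_le h
  exact key k U q hw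

lemma win_mono_U : ∀ (n : ℕ) (U U' : Set P) (q : P), U ⊆ U' →
    Win α β n U' q → Win α β n U q := by
  intro n
  induction n with
  | zero => intro U U' q hUU h hq; exact h (hUU hq)
  | succ n ih =>
    intro U U' q hUU h
    obtain ⟨hq, h1, h2, h3⟩ := h
    refine ⟨fun hqU => hq (hUU hqU), ?_, ?_, ?_⟩
    · intro a ha b hab
      exact ih _ _ _ (Set.insert_subset_insert hUU) (h1 a (hUU ha) b hab)
    · intro A hA hcard m hm
      exact ih _ _ _ (Set.insert_subset_insert hUU) (h2 A (hA.trans hUU) hcard m hm)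
    · intro B hB j hj hjU
      obtain ⟨b, hb, hw⟩ := h3 B hB j hj (hUU hjU)
      exact ⟨b, hb, ih _ _ _ (Set.insert_subset_insert hUU) hw⟩

/-- A finite subset of the union of a nonempty chain is contained in a member. -/
lemma finite_subset_chain {C : Set (Set P)} (hC : IsChain (· ⊆ ·) C)
    (hne : C.Nonempty) {A : Set P} (hA : A.Finite) (hsub : A ⊆ ⋃₀ C) :
    ∃ U ∈ C, A ⊆ U := by
  revert hsub
  refine Set.Finite.induction_on (motive := fun A _ => A ⊆ ⋃₀ C → ∃ U ∈ C, A ⊆ U) A hA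
    (fun _ => ?_) (fun {a A} haA hAfin ih hsub => ?_)
  · obtain ⟨U, hU⟩ := hne; exact ⟨U, hU, Set.empty_subset U⟩
  · obtain ⟨U, hU, hAU⟩ := ih (fun x hx => hsub (Set.mem_insert_of_mem a hx))
    obtain ⟨V, hV, haV⟩ := hsub (Set.mem_insert a A)
    rcases hC.total hU hV with hUV | hVU
    · exact ⟨V, hV, Set.insert_subset haV (hAU.trans hUV)⟩
    · exact ⟨U, hU, Set.insert_subset (hVU haV) hAU⟩

/-- A finite nonempty subchain has a maximum. -/
lemma chain_finite_max {C : Set (Set P)} (hC : IsChain (· ⊆ ·) C)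
    (hfin : C.Finite) (hne : C.Nonempty) : ∃ U ∈ C, ∀ V ∈ C, V ⊆ U := by
  obtain ⟨U, hU, hmax⟩ := Set.Finite.exists_maximalFor id C hfin hne
  refine ⟨U, hU, fun V hV => ?_⟩
  rcases hC.total hV hU with h | h
  · exact h
  · exact hmax hV h

variable {α β}

/-- The key continuity lemma: if every member of a nonempty chain satisfies all
the `Win` predicates, so does the union of the chain. -/
lemma win_sUnion (hαfin : α < ℵ₀) (hβfin : β < ℵ₀) (q : P) :
    ∀ (n : ℕ) (C : Set (Set P)), IsChain (· ⊆ ·) C → C.Nonempty →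
      (∀ U ∈ C, ∀ m : ℕ, Win α β m U q) → Win α β n (⋃₀ C) q := by
  intro n
  induction n with
  | zero =>
    intro C hC hne hInv hq
    obtain ⟨U, hU, hqU⟩ := hq
    exact hInv U hU 0 hqU
  | succ n ih =>
    intro C hC hne hInv
    have hqnot : q ∉ ⋃₀ C := by
      rintro ⟨U, hU, hqU⟩; exact hInv U hU 0 hqU
    refine ⟨hqnot, ?_, ?_, ?_⟩
    · -- up-challenge
      intro a ha b hab
      obtain ⟨U0, hU0, haU0⟩ := ha
      set C' : Set (Set P) := (insert b) '' {U | U ∈ C ∧ a ∈ U} with hC'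
      have hchain' : IsChain (· ⊆ ·) C' := by
        rintro _ ⟨U, hU, rfl⟩ _ ⟨V, hV, rfl⟩ hne'
        rcases hC.total hU.1 hV.1 with h | h
        · exact Or.inl (Set.insert_subset_insert h)
        · exact Or.inr (Set.insert_subset_insert h)
      have hne' : C'.Nonempty := ⟨insert b U0, ⟨U0, ⟨hU0, haU0⟩, rfl⟩⟩
      have hInv' : ∀ V ∈ C', ∀ m : ℕ, Win α β m V q := by
        rintro _ ⟨U, hU, rfl⟩ m
        exact (hInv U hU.1 (m + 1)).2.1 a hU.2 b hab
      have hsub : insert b (⋃₀ C) ⊆ ⋃₀ C' := by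
        rintro x (h | ⟨V, hV, hxV⟩)
        · rw [h]
          exact ⟨insert b U0, ⟨U0, ⟨hU0, haU0⟩, rfl⟩, Set.mem_insert _ _⟩
        · rcases hC.total hV hU0 with h | h
          · exact ⟨insert b U0, ⟨U0, ⟨hU0, haU0⟩, rfl⟩,
              Set.mem_insert_of_mem _ (h hxV)⟩
          · exact ⟨insert b V, ⟨V, ⟨hV, h haU0⟩, rfl⟩,
              Set.mem_insert_of_mem _ hxV⟩
      exact win_mono_U α β n _ _ q hsub (ih C' hchain' hne' hInv')
    · -- inf-challenge
      intro A hA hcard m hm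
      have hAfin : A.Finite := lt_aleph0_iff_set_finite.mp (hcard.trans hαfin)
      obtain ⟨U0, hU0, hAU0⟩ := finite_subset_chain hC hne hAfin hA
      set C' : Set (Set P) := (insert m) '' {U | U ∈ C ∧ A ⊆ U} with hC'
      have hchain' : IsChain (· ⊆ ·) C' := by
        rintro _ ⟨U, hU, rfl⟩ _ ⟨V, hV, rfl⟩ hne'
        rcases hC.total hU.1 hV.1 with h | h
        · exact Or.inl (Set.insert_subset_insert h)
        · exact Or.inr (Set.insert_subset_insert h)
      have hne' : C'.Nonempty := ⟨insert m U0, ⟨U0, ⟨hU0, hAU0⟩, rfl⟩⟩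
      have hInv' : ∀ V ∈ C', ∀ k : ℕ, Win α β k V q := by
        rintro _ ⟨U, hU, rfl⟩ k
        exact (hInv U hU.1 (k + 1)).2.2.1 A hU.2 hcard m hm
      have hsub : insert m (⋃₀ C) ⊆ ⋃₀ C' := by
        rintro x (h | ⟨V, hV, hxV⟩)
        · rw [h]
          exact ⟨insert m U0, ⟨U0, ⟨hU0, hAU0⟩, rfl⟩, Set.mem_insert _ _⟩
        · rcases hC.total hV hU0 with h | h
          · exact ⟨insert m U0, ⟨U0, ⟨hU0, hAU0⟩, rfl⟩,
              Set.mem_insert_of_mem _ (h hxV)⟩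
          · exact ⟨insert m V, ⟨V, ⟨hV, hAU0.trans h⟩, rfl⟩,
              Set.mem_insert_of_mem _ hxV⟩
      exact win_mono_U α β n _ _ q hsub (ih C' hchain' hne' hInv')
    · -- sup-challenge
      intro B hB j hj hjU
      obtain ⟨U0, hU0, hjU0⟩ := hjU
      have hBfin : B.Finite := lt_aleph0_iff_set_finite.mp (hB.trans hβfin)
      -- find a single b ∈ B working for all members of the chain containing j
      have hkey : ∃ b ∈ B, ∀ U ∈ C, j ∈ U → ∀ m : ℕ, Win α β m (insert b U) q := by
        by_contra hcon
        push_neg at hcon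
        -- for each b ∈ B pick a witness of failure
        choose f hfC hfj g hg using hcon
        -- the finite set of failure witnesses
        have hBne : B.Nonempty := by
          obtain ⟨b, hb, _⟩ := (hInv U0 hU0 1).2.2.2 B hB j hj hjU0
          exact ⟨b, hb⟩
        set D : Set (Set P) := {V | ∃ b : P, ∃ hb : b ∈ B, V = f b hb} with hD
        have hDsub : D ⊆ C := by rintro _ ⟨b, hb, rfl⟩; exact hfC b hb
        have hDfin : D.Finite := by
          have : D ⊆ (fun x : B => f x.1 x.2) '' Set.univ := by
            rintro _ ⟨b, hb, rfl⟩; exact ⟨⟨b, hb⟩, Set.mem_univ _, rfl⟩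
          have : Finite B := hBfin.to_subtype
          exact Set.Finite.subset (Set.Finite.image _ Set.finite_univ) ‹D ⊆ _›
        have hDne : D.Nonempty := by
          obtain ⟨b, hb⟩ := hBne; exact ⟨f b hb, b, hb, rfl⟩
        obtain ⟨Um, hUmD, hUmax⟩ :=
          chain_finite_max (hC.mono hDsub) hDfin hDne
        -- bound for the failure levels
        have hgfin : ((fun x : B => g x.1 x.2) '' Set.univ).Finite := by
          have : Finite B := hBfin.to_subtype
          exact Set.Finite.image _ Set.finite_univ
        obtain ⟨N, hN⟩ := hgfin.bddAbove
        have hjUm : j ∈ Um := by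
          obtain ⟨b, hb, rfl⟩ := hUmD; exact hfj b hb
        obtain ⟨b, hb, hw⟩ :=
          (hInv Um (hDsub hUmD) (N + 1)).2.2.2 B hB j hj hjUm
        refine hg b hb ?_
        have h1 : g b hb ≤ N := by
          refine le_trans (hN ?_) le_rfl
          exact ⟨⟨b, hb⟩, Set.mem_univ _, rfl⟩
        have h2 : f b hb ⊆ Um := hUmax _ ⟨b, hb, rfl⟩
        exact win_of_le α β h1
          (win_mono_U α β N _ _ q (Set.insert_subset_insert h2) hw)
      obtain ⟨b, hbB, hball⟩ := hkey
      refine ⟨b, hbB, ?_⟩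
      set C' : Set (Set P) := (insert b) '' {U | U ∈ C ∧ j ∈ U} with hC'
      have hchain' : IsChain (· ⊆ ·) C' := by
        rintro _ ⟨U, hU, rfl⟩ _ ⟨V, hV, rfl⟩ hne'
        rcases hC.total hU.1 hV.1 with h | h
        · exact Or.inl (Set.insert_subset_insert h)
        · exact Or.inr (Set.insert_subset_insert h)
      have hne' : C'.Nonempty := ⟨insert b U0, ⟨U0, ⟨hU0, hjU0⟩, rfl⟩⟩
      have hInv' : ∀ V ∈ C', ∀ m : ℕ, Win α β m V q := by
        rintro _ ⟨U, hU, rfl⟩ m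
        exact hball U hU.1 hU.2 m
      have hsub : insert b (⋃₀ C) ⊆ ⋃₀ C' := by
        rintro x (h | ⟨V, hV, hxV⟩)
        · rw [h]
          exact ⟨insert b U0, ⟨U0, ⟨hU0, hjU0⟩, rfl⟩, Set.mem_insert _ _⟩
        · rcases hC.total hV hU0 with h | h
          · exact ⟨insert b U0, ⟨U0, ⟨hU0, hjU0⟩, rfl⟩,
              Set.mem_insert_of_mem _ (h hxV)⟩
          · exact ⟨insert b V, ⟨V, ⟨hV, h hjU0⟩, rfl⟩,
              Set.mem_insert_of_mem _ hxV⟩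
      exact win_mono_U α β n _ _ q hsub (ih C' hchain' hne' hInv')

end Aux

/-- A "good" subset of `P`: up-closed, closed under existing `<α`-infima,
and prime with respect to existing `<β`-suprema. -/
def GoodSet (α β : Cardinal.{u}) {P : Type u} [PartialOrder P] (x : Set P) : Prop :=
  (∀ a ∈ x, ∀ b, a ≤ b → b ∈ x) ∧
  (∀ A : Set P, A ⊆ x → #A < α → ∀ m, IsGLB A m → m ∈ x) ∧
  (∀ B : Set P, #B < β → ∀ j, IsLUB B j → j ∈ x → ∃ b ∈ B, b ∈ x)

theorem representable_iff_win_of_finite (α β : Cardinal.{u})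
    (hα2 : 2 ≤ α) (hαfin : α < ℵ₀) (hβ2 : 2 ≤ β) (hβfin : β < ℵ₀)
    (P : Type u) [PartialOrder P] :
    IsABRepresentable α β P ↔
      ∀ p q : P, ¬p ≤ q → ∀ n : ℕ, Win α β n {p} q := by
  constructor
  · -- representable → winning strategies
    rintro ⟨X, h, hemb, hinf, hsup⟩ p q hpq n
    have hns : ¬ h p ⊆ h q := fun hh => hpq ((hemb p q).2 hh)
    obtain ⟨x, hxp, hxq⟩ := Set.not_subset.mp hns
    have key : ∀ (n : ℕ) (U : Set P), (∀ u ∈ U, x ∈ h u) → Win α β n U q := by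
      intro n
      induction n with
      | zero => intro U hU hq; exact hxq (hU q hq)
      | succ n ih =>
        intro U hU
        refine ⟨fun hq => hxq (hU q hq), ?_, ?_, ?_⟩
        · intro a ha b hab
          refine ih _ ?_
          rintro u (rfl | hu)
          · exact (hemb a u).1 hab (hU a ha)
          · exact hU u hu
        · intro A hA hcard m hm
          refine ih _ ?_
          rintro u (rfl | hu)
          · rw [hinf A u hcard hm]
            exact Set.mem_iInter₂.mpr fun s hs => hU s (hA hs)
          · exact hU u hu
        · intro B hB j hj hjU
          have hxj : x ∈ h j := hU j hjU
          rw [hsup B j hB hj] at hxj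
          obtain ⟨b, hb, hxb⟩ := Set.mem_iUnion₂.mp hxj
          refine ⟨b, hb, ih _ ?_⟩
          rintro u (rfl | hu)
          · exact hxb
          · exact hU u hu
    exact key n {p} (fun u hu => by rw [Set.eq_of_mem_singleton hu]; exact hxp)
  · -- winning strategies → representable
    intro hwin
    refine ⟨{x : Set P // GoodSet α β x}, fun p => {x | p ∈ x.1}, ?_, ?_, ?_⟩
    · intro p q
      constructor
      · intro hpq x hx
        exact x.2.1 p hx q hpq
      · intro hss
        by_contra hpq
        -- construct a good set containing p but not q
        have hpn : ∀ n : ℕ, Win α β n {p} q := hwin p q hpq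
        set S : Set (Set P) := {U | p ∈ U ∧ ∀ n : ℕ, Win α β n U q} with hS
        have hchainub : ∀ c ⊆ S, IsChain (· ⊆ ·) c → c.Nonempty →
            ∃ ub ∈ S, ∀ s ∈ c, s ⊆ ub := by
          intro c hcS hcchain hcne
          refine ⟨⋃₀ c, ⟨?_, ?_⟩, fun s hs => Set.subset_sUnion_of_mem hs⟩
          · obtain ⟨U, hU⟩ := hcne
            exact ⟨U, hU, (hcS hU).1⟩
          · intro n
            exact win_sUnion hαfin hβfin q n c hcchain hcne
              (fun U hU m => (hcS hU).2 m)
        obtain ⟨M, hpM, hMmax⟩ := zorn_subset_nonempty S hchainub {p}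
          ⟨Set.mem_singleton p, hpn⟩
        have hMS : M ∈ S := hMmax.1
        have hMwin : ∀ n : ℕ, Win α β n M q := hMS.2
        -- M is closed under the game moves by maximality
        have hclosed : ∀ b : P, (∀ n : ℕ, Win α β n (insert b M) q) → b ∈ M := by
          intro b hb
          have : insert b M ∈ S := ⟨Set.mem_insert_of_mem b hMS.1, hb⟩
          exact (hMmax.2 this (Set.subset_insert b M)) (Set.mem_insert b M)
        have hgood : GoodSet α β M := by
          refine ⟨?_, ?_, ?_⟩
          · intro a ha b hab
            exact hclosed b (fun n => (hMwin (n + 1)).2.1 a ha b hab)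
          · intro A hA hcard m hm
            exact hclosed m (fun n => (hMwin (n + 1)).2.2.1 A hA hcard m hm)
          · intro B hB j hj hjM
            have hBfin : B.Finite := lt_aleph0_iff_set_finite.mp (hB.trans hβfin)
            have : Finite B := hBfin.to_subtype
            have hch : ∀ n : ℕ, ∃ b : B, Win α β n (insert b.1 M) q := by
              intro n
              obtain ⟨b, hbB, hw⟩ := (hMwin (n + 1)).2.2.2 B hB j hj hjM
              exact ⟨⟨b, hbB⟩, hw⟩
            choose f hf using hch
            obtain ⟨y, hy⟩ := Finite.exists_infinite_fiber f
            have hyinf : (f ⁻¹' {y}).Infinite := Set.infinite_coe_iff.mp hy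
            refine ⟨y.1, y.2, hclosed y.1 fun n => ?_⟩
            obtain ⟨m, hm, hnm⟩ := hyinf.exists_gt n
            have : f m = y := hm
            exact win_of_le α β hnm.le (this ▸ hf m)
        have : (⟨M, hgood⟩ : {x : Set P // GoodSet α β x}) ∈ {x | p ∈ x.1} :=
          hMS.1
        have hqM : q ∈ M := hss this
        exact (hMwin 0) hqM
    · intro S m hcard hglb
      ext x
      simp only [Set.mem_setOf_eq, Set.mem_iInter]
      constructor
      · intro hmx s hs
        exact x.2.1 m hmx s (hglb.1 hs)
      · intro hall
        exact x.2.2.1 S (fun s hs => hall s hs) hcard m hglb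
    · intro T j hcard hlub
      ext x
      simp only [Set.mem_setOf_eq, Set.mem_iUnion]
      constructor
      · intro hjx
        obtain ⟨b, hb, hbx⟩ := x.2.2.2 T hcard j hlub hjx
        exact ⟨b, hb, hbx⟩
      · rintro ⟨t, ht, htx⟩
        exact x.2.1 t htx j (hlub.1 ht)
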